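/- Let C = η₀A₀ ⊕ η₁A₁ ⊕ η₂A₂ be a skew (σ, δ)-constacyclic code of length n over R = F_{p^m}[v]/⟨v^3 - v⟩. Then C^⊥ ⊆ C if and only if A_i^⊥ ⊆ A_i for all i = 0, 1, 2. -/

import Mathlib

open Polynomial

set_option synthInstance.maxHeartbeats 1000000
set_option maxHeartbeats 1000000

noncomputable section

/-- The ring `R = F[v]/⟨v^3 - v⟩`. -/
abbrev Rq (F : Type) [Field F] : Type :=
  Polynomial F ⧸ Ideal.span {(X : Polynomial F) ^ 3 - X}

/-- The image of `v` in `R`. -/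
def vR (F : Type) [Field F] : Rq F := Ideal.Quotient.mk _ X

/-- The orthogonal idempotents `η₀ = 1 - v²`, `η₁ = ζ(v² + v)`, `η₂ = ζ(v² - v)`
with `ζ = 2⁻¹`. -/
def eta (F : Type) [Field F] : Fin 3 → Rq F :=
  ![1 - vR F ^ 2,
    algebraMap F (Rq F) (2 : F)⁻¹ * (vR F ^ 2 + vR F),
    algebraMap F (Rq F) (2 : F)⁻¹ * (vR F ^ 2 - vR F)]

/-- A code `C` of length `n` over `S` is skew `(σ, δ)`-constacyclic if it is closed
under the shift `(c₀, …, c_{n-1}) ↦ (σ(δ c_{n-1}), σ(c₀), …, σ(c_{n-2}))`. -/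
def IsSkewConstacyclic {S : Type} [CommRing S] {n : ℕ} [NeZero n]
    (σ : RingAut S) (δ : S) (C : Set (Fin n → S)) : Prop :=
  ∀ c ∈ C, (fun i : Fin n => σ ((if i = 0 then δ else 1) * c (i - 1))) ∈ C

/-- The Euclidean dual of a code, with respect to the standard bilinear form. -/
def dualSet {ι S : Type} [Fintype ι] [CommRing S] (C : Set (ι → S)) : Set (ι → S) :=
  {a | ∀ b ∈ C, ∑ t, a t * b t = 0}

/-- The polynomial (coefficient vector) associated to a codeword. -/
noncomputable def toPoly {S : Type} [Semiring S] {n : ℕ} (c : Fin n → S) : ℕ →₀ S :=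
  ∑ i : Fin n, Finsupp.single (i : ℕ) (c i)

/-- A polynomial is monic: it has a coefficient equal to `1` beyond which all
coefficients vanish. -/
def IsMonicPoly {S : Type} [Semiring S] (g : ℕ →₀ S) : Prop :=
  ∃ d, g d = 1 ∧ ∀ j, d < j → g j = 0

/-- The skew reciprocal polynomial `h*(x) = Σ_{j=0}^k Θ^j(h_{k-j}) x^j` of a
polynomial `h` of degree (at most) `k`. -/
noncomputable def skewRecip {S : Type} [Ring S] (Θ : RingAut S) (k : ℕ) (h : ℕ →₀ S) :
    ℕ →₀ S :=
  ∑ j ∈ Finset.range (k + 1), Finsupp.single j ((Θ ^ j) (h (k - j)))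

section Aux

variable (F : Type) [Field F]

lemma vR_cube : vR F ^ 3 = vR F := by
  rw [← sub_eq_zero, vR, ← map_pow, ← map_sub, Ideal.Quotient.eq_zero_iff_mem]
  exact Ideal.subset_span rfl

lemma eta_zero : _root_.eta F 0 = 1 - vR F ^ 2 := rfl
lemma eta_one : _root_.eta F 1 = algebraMap F (Rq F) (2 : F)⁻¹ * (vR F ^ 2 + vR F) := rfl
lemma eta_two : _root_.eta F 2 = algebraMap F (Rq F) (2 : F)⁻¹ * (vR F ^ 2 - vR F) := rfl

def eF : Fin 3 → F := ![0, 1, -1]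

lemma eF_cube (i : Fin 3) : eF F i ^ 3 = eF F i := by
  fin_cases i <;> simp [eF] <;> ring

def phiR (i : Fin 3) : Rq F →+* F :=
  Ideal.Quotient.lift _ (eval₂RingHom (RingHom.id F) (eF F i)) (by
    intro f hf
    rw [Ideal.mem_span_singleton] at hf
    obtain ⟨g, rfl⟩ := hf
    simp [eF_cube F i, sub_eq_zero])

lemma phiR_mk (i : Fin 3) (f : Polynomial F) :
    phiR F i (Ideal.Quotient.mk _ f) = f.eval (eF F i) := by
  rw [phiR, Ideal.Quotient.lift_mk]; rfl

lemma phiR_v (i : Fin 3) : phiR F i (vR F) = eF F i := by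
  simp [vR, phiR_mk]

lemma mk_C (a : F) : Ideal.Quotient.mk (Ideal.span {(X : Polynomial F) ^ 3 - X}) (C a)
    = algebraMap F (Rq F) a := rfl

lemma phiR_alg (i : Fin 3) (a : F) : phiR F i (algebraMap F (Rq F) a) = a := by
  rw [← mk_C, phiR_mk]; simp

lemma phiR_eta (h2 : (2 : F) ≠ 0) (i j : Fin 3) :
    phiR F i (_root_.eta F j) = if i = j then 1 else 0 := by
  fin_cases i <;> fin_cases j <;>
    simp [eta_zero, eta_one, eta_two, map_mul, map_sub, map_add, map_pow, map_one,
      phiR_v, phiR_alg, eF] <;>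
    field_simp <;> ring

lemma alg_inv_two_mul (h2 : (2 : F) ≠ 0) : algebraMap F (Rq F) (2 : F)⁻¹ * 2 = 1 := by
  have h : (2 : Rq F) = algebraMap F (Rq F) (2 : F) := by rw [map_ofNat]
  rw [h, ← map_mul, inv_mul_cancel₀ h2, map_one]

lemma eta_sum (h2 : (2 : F) ≠ 0) : ∑ j, _root_.eta F j = 1 := by
  have hc := alg_inv_two_mul F h2
  rw [Fin.sum_univ_three, eta_zero, eta_one, eta_two]
  linear_combination (vR F ^ 2) * hc

lemma v_eta (h2 : (2 : F) ≠ 0) (j : Fin 3) :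
    vR F * _root_.eta F j = algebraMap F (Rq F) (eF F j) * _root_.eta F j := by
  have hc := alg_inv_two_mul F h2
  have h3 := vR_cube F
  have c0 : vR F * _root_.eta F 0 = algebraMap F (Rq F) (eF F 0) * _root_.eta F 0 := by
    rw [eta_zero]
    simp only [eF, Matrix.cons_val_zero, map_zero, zero_mul]
    linear_combination -h3
  have c1 : vR F * _root_.eta F 1 = algebraMap F (Rq F) (eF F 1) * _root_.eta F 1 := by
    rw [eta_one]
    simp only [eF, Matrix.cons_val_one, Matrix.head_cons, Matrix.cons_val_zero, map_one, one_mul]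
    linear_combination (algebraMap F (Rq F) (2 : F)⁻¹) * h3
  have c2 : vR F * _root_.eta F 2 = algebraMap F (Rq F) (eF F 2) * _root_.eta F 2 := by
    rw [eta_two]
    have h : eF F 2 = -1 := rfl
    rw [h, map_neg, map_one]
    linear_combination (algebraMap F (Rq F) (2 : F)⁻¹) * h3
  fin_cases j
  · exact c0
  · exact c1
  · exact c2

lemma decomp (h2 : (2 : F) ≠ 0) (r : Rq F) :
    r = ∑ j, _root_.eta F j * algebraMap F (Rq F) (phiR F j r) := by
  obtain ⟨f, rfl⟩ := Ideal.Quotient.mk_surjective r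
  simp only [phiR_mk]
  induction f using Polynomial.induction_on with
  | C a =>
      simp only [eval_C, mk_C]
      rw [← Finset.sum_mul, eta_sum F h2, one_mul]
  | add f g hf hg =>
      simp only [map_add, eval_add, hf, hg, ← Finset.sum_add_distrib, ← mul_add]
  | monomial k a hk =>
      have h1 : (C a * X ^ (k + 1)) = (C a * X ^ k) * X := by ring
      rw [h1, map_mul, hk]
      show (∑ j, _) * vR F = _
      rw [Finset.sum_mul]
      refine Finset.sum_congr rfl fun j _ => ?_
      have h5 : eval (eF F j) (C a * X ^ k * X) = eF F j * eval (eF F j) (C a * X ^ k) := by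
        simp; ring
      rw [h5, map_mul]
      calc _root_.eta F j * algebraMap F (Rq F) (eval (eF F j) (C a * X ^ k)) * vR F
          = (vR F * _root_.eta F j) *
              algebraMap F (Rq F) (eval (eF F j) (C a * X ^ k)) := by ring
        _ = (algebraMap F (Rq F) (eF F j) * _root_.eta F j) *
              algebraMap F (Rq F) (eval (eF F j) (C a * X ^ k)) := by rw [v_eta F h2 j]
        _ = _root_.eta F j * (algebraMap F (Rq F) (eF F j) *
              algebraMap F (Rq F) (eval (eF F j) (C a * X ^ k))) := by ring

lemma phiR_inj (h2 : (2 : F) ≠ 0) (r : Rq F) (h : ∀ i, phiR F i r = 0) : r = 0 := by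
  rw [decomp F h2 r]
  simp [h]

end Aux
lemma phiR_comb (F : Type) [Field F] (h2 : (2 : F) ≠ 0) (kk : Fin 3) (z : Fin 3 → F) :
    phiR F kk (∑ j, _root_.eta F j * algebraMap F (Rq F) (z j)) = z kk := by
  rw [map_sum]
  simp only [map_mul, phiR_eta F h2, phiR_alg]
  simp

lemma two_ne_zero_of_card (p m : ℕ) (hp : p.Prime) (hodd : Odd p)
    (F : Type) [Field F] [Fintype F] (hF : Fintype.card F = p ^ m) : (2 : F) ≠ 0 := by
  obtain ⟨k, hkp, hcard⟩ := FiniteField.card F (ringChar F)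
  rw [hF] at hcard
  have hk0 : (k : ℕ) ≠ 0 := k.pos.ne'
  have hdvd : ringChar F ∣ p ^ m := hcard ▸ dvd_pow_self (ringChar F) hk0
  have hqp : ringChar F = p := (Nat.prime_dvd_prime_iff_eq hkp hp).mp
    (hkp.dvd_of_dvd_pow hdvd)
  haveI : CharP F p := hqp ▸ ringChar.charP F
  intro h
  have h2' : ((2 : ℕ) : F) = 0 := by exact_mod_cast h
  have hpd : p ∣ 2 := (CharP.cast_eq_zero_iff F p 2).mp h2'
  have : p = 2 := (Nat.prime_dvd_prime_iff_eq hp Nat.prime_two).mp hpd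
  simp [this, Nat.odd_iff] at hodd

theorem stmt17 (p m n : ℕ) (hp : p.Prime) (hodd : Odd p) (hm : 0 < m) [NeZero n]
    (F : Type) [Field F] [Fintype F] (hF : Fintype.card F = p ^ m)
    (σ : RingAut (Rq F)) (δ : Rq F) (hδu : IsUnit δ)
    (A : Fin 3 → Submodule F (Fin n → F))
    (C : Submodule (Rq F) (Fin n → Rq F))
    (hC : ∀ c, c ∈ C ↔ ∃ y : Fin 3 → Fin n → F, (∀ i, y i ∈ A i) ∧
        c = fun t => ∑ j, eta F j * algebraMap F (Rq F) (y j t))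
    (hconst : IsSkewConstacyclic σ δ (C : Set (Fin n → Rq F))) :
    dualSet (C : Set (Fin n → Rq F)) ⊆ (C : Set (Fin n → Rq F)) ↔
      ∀ i, dualSet ((A i : Set (Fin n → F))) ⊆ (A i : Set (Fin n → F)) := by
  have h2 : (2 : F) ≠ 0 := two_ne_zero_of_card p m hp hodd F hF
  constructor
  · -- C⊥ ⊆ C → A_i⊥ ⊆ A_i
    intro h i b hb
    -- hb : b ∈ dualSet (A i)
    set a : Fin n → Rq F := fun t => _root_.eta F i * algebraMap F (Rq F) (b t) with ha_def
    have ha : a ∈ dualSet (C : Set (Fin n → Rq F)) := by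
      intro c hc'
      obtain ⟨y, hy, rfl⟩ := (hC c).1 hc'
      apply phiR_inj F h2
      intro kk
      rw [map_sum]
      have hterm : ∀ t, phiR F kk
          (a t * ∑ j, _root_.eta F j * algebraMap F (Rq F) (y j t))
          = (if kk = i then 1 else 0) * (b t * y kk t) := by
        intro t
        rw [map_mul, phiR_comb F h2, ha_def]
        simp only [map_mul, phiR_eta F h2, phiR_alg]
        ring
      simp only [hterm]
      rcases eq_or_ne kk i with rfl | hne
      · simpa using hb (y kk) (hy kk)
      · simp [hne]
    have haC := h ha
    rw [SetLike.mem_coe, hC] at haC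
    obtain ⟨y, hy, hay⟩ := haC
    have hbi : b = y i := by
      funext t
      have := congrArg (fun f : Fin n → Rq F => phiR F i (f t)) hay
      simp only [ha_def] at this
      rw [phiR_comb F h2 i (fun j => y j t)] at this
      rw [map_mul, phiR_eta F h2, if_pos rfl, one_mul, phiR_alg] at this
      exact this
    rw [hbi]
    exact hy i
  · -- all A_i⊥ ⊆ A_i → C⊥ ⊆ C
    intro h a ha
    set y : Fin 3 → Fin n → F := fun k t => phiR F k (a t) with hy_def
    have hyk : ∀ k, y k ∈ A k := by
      intro k
      apply h k
      intro b hb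
      -- build the codeword supported in component k
      have hcC : (fun t => ∑ j, _root_.eta F j * algebraMap F (Rq F)
          ((fun j => if j = k then b else (0 : Fin n → F)) j t)) ∈ C := by
        rw [hC]
        exact ⟨fun j => if j = k then b else 0, fun j => by
          rcases eq_or_ne j k with rfl | hne
          · simpa using hb
          · simp [hne], rfl⟩
      have h0 := ha _ hcC
      have h1 := congrArg (phiR F k) h0
      rw [map_sum, map_zero] at h1
      have hterm : ∀ t, phiR F k (a t * ∑ j, _root_.eta F j * algebraMap F (Rq F)
          ((fun j => if j = k then b else (0 : Fin n → F)) j t)) = y k t * b t := by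
        intro t
        rw [map_mul, phiR_comb F h2]
        simp [hy_def]
      rw [Finset.sum_congr rfl fun t _ => hterm t] at h1
      exact h1
    rw [SetLike.mem_coe, hC]
    exact ⟨y, hyk, funext fun t => decomp F h2 (a t)⟩
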